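/- Let M = (E, G) be an n-dimensional matroid with an AG(n−1, 2)-restriction, i.e., G − H ⊆ E for some hyperplane H of G. If M contains neither F₇ nor I₃ as an induced restriction, then either M is isomorphic to AG(n−1, 2), or there exists s ≥ 2 such that M arises from AG°(s−1, 2) by a sequence of doublings. -/

import Mathlib

/-- A simple binary matroid `M = (E, G)`: a dimension `n` together with a ground set `E`
of nonzero vectors of `𝔽₂ⁿ` (the points of `G = 𝔽₂ⁿ \ {0}`). -/
structure BinMatroid where
  dim : ℕ
  E : Set (Fin dim → ZMod 2)
  zero_not_mem : 0 ∉ E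

namespace BinMatroid

/-- `M.HasIR N` : `M` contains `N` as an induced restriction, i.e. there is an injective
linear map `φ` with `φ(E(N)) = E(M) ∩ (φ(G') \ {0})`. -/
def HasIR (M N : BinMatroid) : Prop :=
  ∃ φ : (Fin N.dim → ZMod 2) →ₗ[ZMod 2] (Fin M.dim → ZMod 2),
    Function.Injective φ ∧ φ '' N.E = M.E ∩ (Set.range φ \ {0})

/-- Isomorphism of binary matroids: a bijective induced embedding. -/
def Iso (M N : BinMatroid) : Prop :=
  ∃ φ : (Fin N.dim → ZMod 2) →ₗ[ZMod 2] (Fin M.dim → ZMod 2),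
    Function.Bijective φ ∧ φ '' N.E = M.E ∩ (Set.range φ \ {0})

/-- The critical number of the induced restriction of the ground set `E` to the flat of
the subspace `F`: the least `k` such that some flat of `F` of dimension `dim F - k`
is disjoint from `E`. -/
noncomputable def critNumRes {n : ℕ} (E : Set (Fin n → ZMod 2))
    (F : Submodule (ZMod 2) (Fin n → ZMod 2)) : ℕ :=
  sInf {k : ℕ | ∃ W : Submodule (ZMod 2) (Fin n → ZMod 2), W ≤ F ∧
    Module.finrank (ZMod 2) W = Module.finrank (ZMod 2) F - k ∧
    Disjoint ((W : Set (Fin n → ZMod 2)) \ {0}) E}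

/-- The critical number `χ(M)`: the least `k ≥ 0` such that some flat of dimension
`n - k` is disjoint from `E`. -/
noncomputable def critNum (M : BinMatroid) : ℕ :=
  sInf {k : ℕ | ∃ W : Submodule (ZMod 2) (Fin M.dim → ZMod 2),
    Module.finrank (ZMod 2) W = M.dim - k ∧
    Disjoint ((W : Set (Fin M.dim → ZMod 2)) \ {0}) M.E}

/-- `M ∈ ℰ_k` : every induced restriction of `M` to a flat of dimension at least `k`
has even size. -/
def MemE (k : ℕ) (M : BinMatroid) : Prop :=
  ∀ W : Submodule (ZMod 2) (Fin M.dim → ZMod 2),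
    k ≤ Module.finrank (ZMod 2) W →
    Even (M.E ∩ ((W : Set (Fin M.dim → ZMod 2)) \ {0})).ncard

/-- `M` is full-rank: `E` spans `𝔽₂ⁿ`. -/
def FullRank (M : BinMatroid) : Prop :=
  Submodule.span (ZMod 2) M.E = ⊤

/-- `M` is (isomorphic to) the doubling of `M₀`: `M₀` is identified, via an injective
linear map `φ`, with the restriction of `M` to a hyperplane `H = range φ`, there is
`w ∈ G − (E ∪ H)`, and `E = (E ∩ H) ∪ (w + (E ∩ H))`. -/
def IsDoublingOf (M M₀ : BinMatroid) : Prop :=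
  M.dim = M₀.dim + 1 ∧
  ∃ φ : (Fin M₀.dim → ZMod 2) →ₗ[ZMod 2] (Fin M.dim → ZMod 2),
    Function.Injective φ ∧
    ∃ w : Fin M.dim → ZMod 2, w ≠ 0 ∧ w ∉ Set.range φ ∧ w ∉ M.E ∧
      M.E = φ '' M₀.E ∪ (fun x => w + x) '' (φ '' M₀.E)

/-- `M` arises from `M₀` by a (possibly empty) sequence of doublings. -/
def ArisesByDoublings (M M₀ : BinMatroid) : Prop :=
  ∃ M' : BinMatroid,
    Relation.ReflTransGen (fun A B => IsDoublingOf B A) M₀ M' ∧ M.Iso M'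

/-- `M` is (a copy of) `AG°(t−1, 2)`, the matroid `((G − H) ∪ {x}, G)` with `H` a
hyperplane of `G` and `x ∈ H`, where `t = M.dim`. -/
def IsAGo (M : BinMatroid) : Prop :=
  ∃ H : Submodule (ZMod 2) (Fin M.dim → ZMod 2),
    Module.finrank (ZMod 2) H + 1 = M.dim ∧
    ∃ x ∈ (H : Set (Fin M.dim → ZMod 2)) \ {0},
      M.E = ({v | v ≠ 0} \ (H : Set (Fin M.dim → ZMod 2))) ∪ {x}

/-- `M` is a Bose–Burton geometry of order `k`: `E = G − F` for a flat `F` of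
dimension `n − k`. -/
def IsBoseBurton (M : BinMatroid) (k : ℕ) : Prop :=
  k ≤ M.dim ∧ ∃ W : Submodule (ZMod 2) (Fin M.dim → ZMod 2),
    Module.finrank (ZMod 2) W = M.dim - k ∧
    M.E = {v | v ≠ 0} \ (W : Set (Fin M.dim → ZMod 2))

/-- The ground set `E` (of a matroid of the ambient dimension `n`) is the semidoubling
of its restriction to the hyperplane `H₁` with respect to the hyperplane `H₀` of `H₁`:
there is `w ∈ G − (E ∪ H₁)` with `|{x, x+w} ∩ E| ∈ {0, 2}` for every `x ∈ H₀` and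
`|{x, x+w} ∩ E| = 1` for every `x ∈ H₁ − H₀`. -/
def IsSemidoublingWrt {n : ℕ} (E : Set (Fin n → ZMod 2))
    (H₁ H₀ : Submodule (ZMod 2) (Fin n → ZMod 2)) : Prop :=
  H₀ ≤ H₁ ∧ Module.finrank (ZMod 2) H₀ + 1 = Module.finrank (ZMod 2) H₁ ∧
  ∃ w : Fin n → ZMod 2, w ≠ 0 ∧ w ∉ H₁ ∧ w ∉ E ∧
    (∀ x ∈ (H₀ : Set (Fin n → ZMod 2)) \ {0},
      (({x, x + w} : Set (Fin n → ZMod 2)) ∩ E).ncard = 0 ∨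
      (({x, x + w} : Set (Fin n → ZMod 2)) ∩ E).ncard = 2) ∧
    (∀ x ∈ (H₁ : Set (Fin n → ZMod 2)) \ (H₀ : Set (Fin n → ZMod 2)),
      (({x, x + w} : Set (Fin n → ZMod 2)) ∩ E).ncard = 1)

/-- The ground set `E` is a semidoubling of its restriction to the hyperplane `H₁`
(with respect to some hyperplane `H₀` of `H₁`). -/
def IsSemidoublingOfRes {n : ℕ} (E : Set (Fin n → ZMod 2))
    (H₁ : Submodule (ZMod 2) (Fin n → ZMod 2)) : Prop :=
  ∃ H₀ : Submodule (ZMod 2) (Fin n → ZMod 2), IsSemidoublingWrt E H₁ H₀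

/-- `M` is (isomorphic to) a semidoubling of `M₀`: `M₀` is identified, via an injective
linear map `φ`, with the restriction of `M` to the hyperplane `range φ`, and `M` is a
semidoubling of that restriction. -/
def IsSemidoublingOf (M M₀ : BinMatroid) : Prop :=
  M.dim = M₀.dim + 1 ∧
  ∃ φ : (Fin M₀.dim → ZMod 2) →ₗ[ZMod 2] (Fin M.dim → ZMod 2),
    Function.Injective φ ∧
    φ '' M₀.E = M.E ∩ (Set.range φ \ {0}) ∧
    IsSemidoublingOfRes M.E (LinearMap.range φ)

/-- `M` arises from `M₀` by a (possibly empty) sequence of semidoublings. -/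
def ArisesBySemidoublings (M M₀ : BinMatroid) : Prop :=
  ∃ M' : BinMatroid,
    Relation.ReflTransGen (fun A B => IsSemidoublingOf B A) M₀ M' ∧ M.Iso M'

end BinMatroid

/-- A triangle of `G`: a set `{x, y, z}` of three distinct nonzero vectors with
`x + y + z = 0`. -/
def IsTriangle {n : ℕ} (T : Set (Fin n → ZMod 2)) : Prop :=
  ∃ x y z : Fin n → ZMod 2, x ≠ 0 ∧ y ≠ 0 ∧ z ≠ 0 ∧
    x ≠ y ∧ x ≠ z ∧ y ≠ z ∧ x + y + z = 0 ∧ T = {x, y, z}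

/-- `I₃`, the claw: the 3-dimensional matroid whose ground set is the three standard
basis vectors of `𝔽₂³`. -/
def I3 : BinMatroid where
  dim := 3
  E := Set.range fun i : Fin 3 => (Pi.single i 1 : Fin 3 → ZMod 2)
  zero_not_mem := by
    rintro ⟨i, hi⟩
    have := congrFun hi i
    simp [Pi.single_eq_same] at this

/-- `F₇`, the Fano plane: the 3-dimensional matroid whose ground set is all of
`𝔽₂³ \ {0}`. -/
def F7 : BinMatroid where
  dim := 3
  E := {v | v ≠ 0}
  zero_not_mem := by simp

/-- `K₅`: the 4-dimensional matroid whose ground set is the set of vectors of Hamming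
weight 1 or 2 in `𝔽₂⁴`. -/
def K5 : BinMatroid where
  dim := 4
  E := {v | hammingNorm v = 1 ∨ hammingNorm v = 2}
  zero_not_mem := by
    intro h
    simp only [Set.mem_setOf_eq, hammingNorm_zero] at h
    omega


open Module

-- helpers
lemma zmod2_cases (c : ZMod 2) : c = 0 ∨ c = 1 := by revert c; decide

lemma vadd_self {n : ℕ} (v : Fin n → ZMod 2) : v + v = 0 := by
  rw [← two_smul (ZMod 2), show (2 : ZMod 2) = 0 by decide, zero_smul]

lemma eq_of_vadd_eq_zero {n : ℕ} {u v : Fin n → ZMod 2} (h : u + v = 0) : u = v := by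
  have : u + v + v = v := by rw [h, zero_add]
  rwa [add_assoc, vadd_self, add_zero] at this

lemma vadd_cancel {n : ℕ} (u v : Fin n → ZMod 2) : u + (u + v) = v := by
  rw [← add_assoc, vadd_self, zero_add]

def tmap {n : ℕ} (x y z : Fin n → ZMod 2) :
    (Fin 3 → ZMod 2) →ₗ[ZMod 2] (Fin n → ZMod 2) where
  toFun v := v 0 • x + v 1 • y + v 2 • z
  map_add' u v := by simp [add_smul]; abel
  map_smul' c v := by simp [mul_smul, smul_add]

lemma tmap_inj {n : ℕ} {x y z : Fin n → ZMod 2}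
    (h : ∀ v : Fin 3 → ZMod 2, v 0 • x + v 1 • y + v 2 • z = 0 → v = 0) :
    Function.Injective (tmap x y z) := by
  rw [← LinearMap.ker_eq_bot]
  refine (Submodule.eq_bot_iff _).2 fun v hv => h v ?_
  simpa [tmap] using hv

lemma vzero_of {v : Fin 3 → ZMod 2} (h0 : v 0 = 0) (h1 : v 1 = 0) (h2 : v 2 = 0) :
    v = 0 := by funext i; fin_cases i <;> assumption


lemma tmap_cases {n : ℕ} (x y z : Fin n → ZMod 2) (v : Fin 3 → ZMod 2) :
    (v = 0 ∧ tmap x y z v = 0) ∨ (v ≠ 0 ∧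
      (tmap x y z v = x ∨ tmap x y z v = y ∨ tmap x y z v = z ∨
       tmap x y z v = x + y ∨ tmap x y z v = x + z ∨ tmap x y z v = y + z ∨
       tmap x y z v = x + y + z)) := by
  have hne1 : ∀ i : Fin 3, v i = 1 → v ≠ 0 := by
    intro i hi h; rw [h] at hi; simp at hi
  rcases zmod2_cases (v 0) with h0 | h0 <;> rcases zmod2_cases (v 1) with h1 | h1 <;>
    rcases zmod2_cases (v 2) with h2 | h2
  · exact Or.inl ⟨vzero_of h0 h1 h2, by simp [tmap, h0, h1, h2]⟩
  · exact Or.inr ⟨hne1 2 h2, by simp [tmap, h0, h1, h2]⟩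
  · exact Or.inr ⟨hne1 1 h1, by simp [tmap, h0, h1, h2]⟩
  · exact Or.inr ⟨hne1 1 h1, by simp [tmap, h0, h1, h2]⟩
  · exact Or.inr ⟨hne1 0 h0, by simp [tmap, h0, h1, h2]⟩
  · exact Or.inr ⟨hne1 0 h0, by simp [tmap, h0, h1, h2]⟩
  · exact Or.inr ⟨hne1 0 h0, by simp [tmap, h0, h1, h2]⟩
  · exact Or.inr ⟨hne1 0 h0, by simp [tmap, h0, h1, h2, add_assoc]⟩

/-- If the seven nonzero combinations of `x,y,z` are all nonzero, `tmap x y z` is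
injective. -/
lemma tmap_inj' {n : ℕ} {x y z : Fin n → ZMod 2} (h1 : x ≠ 0) (h2 : y ≠ 0) (h3 : z ≠ 0)
    (h4 : x + y ≠ 0) (h5 : x + z ≠ 0) (h6 : y + z ≠ 0) (h7 : x + y + z ≠ 0) :
    Function.Injective (tmap x y z) := by
  rw [← LinearMap.ker_eq_bot]
  refine (Submodule.eq_bot_iff _).2 fun v hv => ?_
  rw [LinearMap.mem_ker] at hv
  rcases tmap_cases x y z v with ⟨hv0, _⟩ | ⟨_, h⟩
  · exact hv0
  · rcases h with h | h | h | h | h | h | h <;> rw [hv] at h <;>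
      [exact absurd h.symm h1; exact absurd h.symm h2; exact absurd h.symm h3;
       exact absurd h.symm h4; exact absurd h.symm h5; exact absurd h.symm h6;
       exact absurd h.symm h7]


/-- Lemma A: no triangle with two points in `E ∩ H`. -/
lemma noTriangle (M : BinMatroid) (H : Submodule (ZMod 2) (Fin M.dim → ZMod 2))
    (hH : finrank (ZMod 2) H + 1 = M.dim)
    (hAG : {v : Fin M.dim → ZMod 2 | v ≠ 0} \ (H : Set (Fin M.dim → ZMod 2)) ⊆ M.E)
    (hF7 : ¬ M.HasIR F7) {x y : Fin M.dim → ZMod 2}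
    (hx : x ∈ M.E) (hxH : x ∈ H) (hy : y ∈ M.E) (hyH : y ∈ H) (hxy : x ≠ y) :
    x + y ∉ M.E := by
  intro hxyE
  have hx0 : x ≠ 0 := fun h => M.zero_not_mem (h ▸ hx)
  have hy0 : y ≠ 0 := fun h => M.zero_not_mem (h ▸ hy)
  obtain ⟨a, haH⟩ : ∃ a, a ∉ H := by
    by_contra hc; push_neg at hc
    have : H = ⊤ := Submodule.eq_top_iff'.2 hc
    rw [this] at hH
    have h2 : finrank (ZMod 2) (⊤ : Submodule (ZMod 2) (Fin M.dim → ZMod 2)) = M.dim := by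
      simp [finrank_top, finrank_pi]
    omega
  have ha0 : a ≠ 0 := fun h => haH (h ▸ H.zero_mem)
  have hsum : ∀ u : Fin M.dim → ZMod 2, u ∈ H → u + a ∉ H := by
    intro u hu hua
    exact haH ((vadd_cancel u a) ▸ H.add_mem hu hua)
  have hsum0 : ∀ u : Fin M.dim → ZMod 2, u ∈ H → u + a ≠ 0 :=
    fun u hu h => haH ((eq_of_vadd_eq_zero h).symm ▸ hu)
  have hsumE : ∀ u : Fin M.dim → ZMod 2, u ∈ H → u + a ∈ M.E :=
    fun u hu => hAG ⟨hsum0 u hu, hsum u hu⟩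
  apply hF7
  have hinj : Function.Injective (tmap x y a) :=
    tmap_inj' hx0 hy0 ha0 (fun h => hxy (eq_of_vadd_eq_zero h)) (hsum0 x hxH) (hsum0 y hyH)
      (hsum0 (x + y) (H.add_mem hxH hyH))
  suffices h : ∃ φ : (Fin 3 → ZMod 2) →ₗ[ZMod 2] (Fin M.dim → ZMod 2),
      Function.Injective φ ∧
      φ '' {v : Fin 3 → ZMod 2 | v ≠ 0} = M.E ∩ (Set.range φ \ {0}) from h
  refine ⟨tmap x y a, hinj, ?_⟩
  have hvals : ∀ u, (tmap x y a) u ≠ 0 → (tmap x y a) u ∈ M.E := by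
    intro u hu
    rcases tmap_cases x y a u with ⟨_, h⟩ | ⟨_, h⟩
    · exact absurd h hu
    · rcases h with h | h | h | h | h | h | h <;> rw [h]
      · exact hx
      · exact hy
      · exact hAG ⟨ha0, haH⟩
      · exact hxyE
      · exact hsumE x hxH
      · exact hsumE y hyH
      · exact hsumE (x + y) (H.add_mem hxH hyH)
  ext u
  simp only [Set.mem_image, Set.mem_inter_iff, Set.mem_diff, Set.mem_range,
    Set.mem_singleton_iff, Set.mem_setOf_eq]
  constructor
  · rintro ⟨v, hv0, rfl⟩
    have hne : tmap x y a v ≠ 0 := fun h => hv0 (hinj (h.trans (map_zero _).symm))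
    exact ⟨hvals v hne, ⟨v, rfl⟩, hne⟩
  · rintro ⟨hE, ⟨v, rfl⟩, hne⟩
    exact ⟨v, fun h => hne (by rw [h, map_zero]), rfl⟩

/-- Lemma B: triple sums of distinct points of `E ∩ H` are in `E`. -/
lemma tripleSum (M : BinMatroid) (H : Submodule (ZMod 2) (Fin M.dim → ZMod 2))
    (hH : finrank (ZMod 2) H + 1 = M.dim)
    (hAG : {v : Fin M.dim → ZMod 2 | v ≠ 0} \ (H : Set (Fin M.dim → ZMod 2)) ⊆ M.E)
    (hF7 : ¬ M.HasIR F7) (hI3 : ¬ M.HasIR I3) {x y z : Fin M.dim → ZMod 2}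
    (hx : x ∈ M.E) (hxH : x ∈ H) (hy : y ∈ M.E) (hyH : y ∈ H) (hz : z ∈ M.E) (hzH : z ∈ H)
    (hxy : x ≠ y) (hxz : x ≠ z) (hyz : y ≠ z) (hs : x + y + z ≠ 0) :
    x + y + z ∈ M.E := by
  by_contra hns
  have hx0 : x ≠ 0 := fun h => M.zero_not_mem (h ▸ hx)
  have hy0 : y ≠ 0 := fun h => M.zero_not_mem (h ▸ hy)
  have hz0 : z ≠ 0 := fun h => M.zero_not_mem (h ▸ hz)
  have hxy0 : x + y ≠ 0 := fun h => hxy (eq_of_vadd_eq_zero h)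
  have hxz0 : x + z ≠ 0 := fun h => hxz (eq_of_vadd_eq_zero h)
  have hyz0 : y + z ≠ 0 := fun h => hyz (eq_of_vadd_eq_zero h)
  have hinj : Function.Injective (tmap x y z) := tmap_inj' hx0 hy0 hz0 hxy0 hxz0 hyz0 hs
  apply hI3
  suffices h : ∃ φ : (Fin 3 → ZMod 2) →ₗ[ZMod 2] (Fin M.dim → ZMod 2),
      Function.Injective φ ∧
      φ '' (Set.range fun i : Fin 3 => (Pi.single i 1 : Fin 3 → ZMod 2)) =
        M.E ∩ (Set.range φ \ {0}) from h
  refine ⟨tmap x y z, hinj, ?_⟩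
  have h1 : (tmap x y z) (Pi.single 0 1) = x := by simp [tmap, Pi.single_apply]
  have h2 : (tmap x y z) (Pi.single 1 1) = y := by simp [tmap, Pi.single_apply]
  have h3 : (tmap x y z) (Pi.single 2 1) = z := by simp [tmap, Pi.single_apply]
  ext u
  simp only [Set.mem_image, Set.mem_inter_iff, Set.mem_diff, Set.mem_range,
    Set.mem_singleton_iff]
  constructor
  · rintro ⟨v, ⟨i, rfl⟩, rfl⟩
    have hi : i = 0 ∨ i = 1 ∨ i = 2 := by revert i; decide
    rcases hi with rfl | rfl | rfl
    · rw [h1]; exact ⟨hx, ⟨Pi.single 0 1, h1⟩, hx0⟩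
    · rw [h2]; exact ⟨hy, ⟨Pi.single 1 1, h2⟩, hy0⟩
    · rw [h3]; exact ⟨hz, ⟨Pi.single 2 1, h3⟩, hz0⟩
  · rintro ⟨hE, ⟨v, rfl⟩, hne⟩
    rcases tmap_cases x y z v with ⟨_, h⟩ | ⟨_, h⟩
    · exact absurd h hne
    · rcases h with h | h | h | h | h | h | h <;> rw [h] at hE ⊢
      · exact ⟨Pi.single 0 1, ⟨0, rfl⟩, h1⟩
      · exact ⟨Pi.single 1 1, ⟨1, rfl⟩, h2⟩
      · exact ⟨Pi.single 2 1, ⟨2, rfl⟩, h3⟩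
      · exact absurd hE (noTriangle M H hH hAG hF7 hx hxH hy hyH hxy)
      · exact absurd hE (noTriangle M H hH hAG hF7 hx hxH hz hzH hxz)
      · exact absurd hE (noTriangle M H hH hAG hF7 hy hyH hz hzH hyz)
      · exact absurd hE hns

/-- The canonical ground set `(G − H) ∪ (x₀ + W)`. -/
def ESet (n : ℕ) (H W : Submodule (ZMod 2) (Fin n → ZMod 2)) (x₀ : Fin n → ZMod 2) :
    Set (Fin n → ZMod 2) :=
  {v | v ≠ 0 ∧ (v ∉ H ∨ x₀ + v ∈ W)}

/-- The canonical matroid with ground set `(G − H) ∪ (x₀ + W)`. -/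
def EMat (n : ℕ) (H W : Submodule (ZMod 2) (Fin n → ZMod 2)) (x₀ : Fin n → ZMod 2) :
    BinMatroid :=
  ⟨n, ESet n H W x₀, fun h => h.1 rfl⟩

lemma key (t : ℕ) : ∀ (n : ℕ) (H W : Submodule (ZMod 2) (Fin n → ZMod 2))
    (x₀ : Fin n → ZMod 2), W ≤ H → finrank (ZMod 2) H + 1 = n → finrank (ZMod 2) W = t →
    x₀ ∈ H → x₀ ∉ W → x₀ ≠ 0 →
    ∃ M₀ : BinMatroid, M₀.dim = n - t ∧ 2 ≤ M₀.dim ∧ M₀.IsAGo ∧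
      Relation.ReflTransGen (fun A B => BinMatroid.IsDoublingOf B A) M₀ (EMat n H W x₀) := by
  induction t with
  | zero =>
    intro n H W x₀ hWH hH hW hx₀H hx₀W hx₀0
    have hWbot : W = ⊥ := Submodule.finrank_eq_zero.1 hW
    have hHpos : 0 < finrank (ZMod 2) H := by
      rcases Nat.eq_zero_or_pos (finrank (ZMod 2) H) with h | h
      · exact absurd (Submodule.finrank_eq_zero.1 h ▸ hx₀H : x₀ ∈ (⊥ : Submodule (ZMod 2) _))
          (by simpa using hx₀0)
      · exact h
    refine ⟨EMat n H W x₀, by simp [EMat], by simp [EMat]; omega, ?_, .refl⟩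
    refine ⟨H, hH, x₀, ⟨hx₀H, fun h => hx₀0 h⟩, ?_⟩
    ext v
    simp only [EMat, ESet, hWbot, Submodule.mem_bot, Set.mem_setOf_eq, Set.mem_union,
      Set.mem_diff, Set.mem_singleton_iff, SetLike.mem_coe]
    constructor
    · rintro ⟨hv0, hv⟩
      rcases hv with hv | hv
      · exact Or.inl ⟨hv0, hv⟩
      · exact Or.inr (eq_of_vadd_eq_zero hv).symm
    · rintro (⟨hv0, hv⟩ | heq)
      · exact ⟨hv0, Or.inl hv⟩
      · exact ⟨by rw [heq]; exact hx₀0, Or.inr (by rw [heq, vadd_self])⟩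
  | succ t ih =>
    intro n H W x₀ hWH hH hW hx₀H hx₀W hx₀0
    -- pick w ∈ W \ {0}
    obtain ⟨w, hwW, hw0⟩ : ∃ w ∈ W, w ≠ (0 : Fin n → ZMod 2) := by
      by_contra hc; push_neg at hc
      have : W = ⊥ := (Submodule.eq_bot_iff W).2 hc
      rw [this] at hW; simp at hW
    have hwH : w ∈ H := hWH hwW
    have hwx₀ : w ≠ x₀ := fun h => hx₀W (h ▸ hwW)
    -- a linear functional f with f x₀ = 0, f w = 1
    have hli : LinearIndependent (ZMod 2) ![x₀, w] := by
      rw [linearIndependent_fin2]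
      refine ⟨by simpa using hw0, fun a => ?_⟩
      rcases zmod2_cases a with rfl | rfl
      · simpa using fun h => hx₀0 h.symm
      · simpa using hwx₀
    have hli' := (linearIndepOn_id_range_iff hli.injective).mpr hli
    let B := Module.Basis.extend hli'
    have hwmem : w ∈ hli'.extend (Set.subset_univ _) :=
      Module.Basis.subset_extend hli' ⟨1, rfl⟩
    have hxmem : x₀ ∈ hli'.extend (Set.subset_univ _) :=
      Module.Basis.subset_extend hli' ⟨0, rfl⟩
    set f : (Fin n → ZMod 2) →ₗ[ZMod 2] ZMod 2 := B.coord ⟨w, hwmem⟩ with hf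
    have hfw : f w = 1 := by
      have : (B.repr (B ⟨w, hwmem⟩)) ⟨w, hwmem⟩ = 1 := by
        rw [B.repr_self]; simp
      rwa [Module.Basis.extend_apply_self] at this
    have hfx : f x₀ = 0 := by
      have : (B.repr (B ⟨x₀, hxmem⟩)) ⟨w, hwmem⟩ = 0 := by
        rw [B.repr_self]
        exact Finsupp.single_eq_of_ne (fun h => hwx₀ (congrArg Subtype.val h))
      rwa [Module.Basis.extend_apply_self] at this
    set K : Submodule (ZMod 2) (Fin n → ZMod 2) := LinearMap.ker f with hK
    have hx₀K : x₀ ∈ K := by rw [hK, LinearMap.mem_ker]; exact hfx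
    have hwK : w ∉ K := by rw [hK, LinearMap.mem_ker, hfw]; exact one_ne_zero
    have hmemK : ∀ v : Fin n → ZMod 2, v ∈ K ↔ f v = 0 := fun v => LinearMap.mem_ker
    -- finrank K = n - 1
    have hfr : finrank (ZMod 2) (Fin n → ZMod 2) = n := by simp [finrank_pi]
    have hrange : LinearMap.range f = ⊤ := by
      rw [Submodule.eq_top_iff']
      intro c
      exact ⟨c • w, by rw [map_smul, hfw, smul_eq_mul, mul_one]⟩
    have hKrank : finrank (ZMod 2) K + 1 = n := by
      have h1 := LinearMap.finrank_range_add_finrank_ker f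
      rw [← hK] at h1
      rw [hrange, hfr, finrank_top] at h1
      simp [finrank_self] at h1
      omega
    -- n ≥ 2
    have hn2 : 2 ≤ n := by
      have : finrank (ZMod 2) W ≤ finrank (ZMod 2) H := Submodule.finrank_mono hWH
      omega
    -- finrank (H ⊓ K) = n - 2
    have hHK : finrank (ZMod 2) (H ⊓ K : Submodule (ZMod 2) (Fin n → ZMod 2)) = n - 2 := by
      have hsup := Submodule.finrank_sup_add_finrank_inf_eq H K
      have hle : finrank (ZMod 2) (H ⊔ K : Submodule (ZMod 2) (Fin n → ZMod 2)) ≤ n := by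
        have := Submodule.finrank_le (R := ZMod 2) (H ⊔ K)
        omega
      have hlt : finrank (ZMod 2) K <
          finrank (ZMod 2) (H ⊔ K : Submodule (ZMod 2) (Fin n → ZMod 2)) :=
        Submodule.finrank_lt_finrank_of_lt
          (lt_of_le_of_ne le_sup_right (fun h => hwK (by rw [h]; exact Submodule.mem_sup_left hwH)))
      omega
    -- finrank (W ⊓ K) = t
    have hWK : finrank (ZMod 2) (W ⊓ K : Submodule (ZMod 2) (Fin n → ZMod 2)) = t := by
      have hsup := Submodule.finrank_sup_add_finrank_inf_eq W K
      have hle : finrank (ZMod 2) (W ⊔ K : Submodule (ZMod 2) (Fin n → ZMod 2)) ≤ n := by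
        have := Submodule.finrank_le (R := ZMod 2) (W ⊔ K)
        omega
      have hlt : finrank (ZMod 2) K <
          finrank (ZMod 2) (W ⊔ K : Submodule (ZMod 2) (Fin n → ZMod 2)) :=
        Submodule.finrank_lt_finrank_of_lt
          (lt_of_le_of_ne le_sup_right (fun h => hwK (by rw [h]; exact Submodule.mem_sup_left hwW)))
      omega
    -- an equivalence of F₂^(n-1) with K
    have hfin : finrank (ZMod 2) (Fin (n - 1) → ZMod 2) = finrank (ZMod 2) K := by
      rw [finrank_pi]; simp; omega
    obtain ⟨ψ⟩ := FiniteDimensional.nonempty_linearEquiv_of_finrank_eq hfin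
    set φ : (Fin (n - 1) → ZMod 2) →ₗ[ZMod 2] (Fin n → ZMod 2) :=
      K.subtype.comp ψ.toLinearMap with hφ
    have hφinj : Function.Injective φ := K.injective_subtype.comp ψ.injective
    have hφK : ∀ u, φ u ∈ K := fun u => (ψ u).2
    have hφsurj : ∀ v ∈ K, ∃ u, φ u = v := fun v hv => ⟨ψ.symm ⟨v, hv⟩, by simp [hφ]⟩
    have hrangeφ : LinearMap.range φ = K := by
      rw [hφ, LinearMap.range_comp, LinearEquiv.range, Submodule.map_top,
        Submodule.range_subtype]
    set H' := Submodule.comap φ (H ⊓ K) with hH'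
    set W' := Submodule.comap φ (W ⊓ K) with hW'
    set x₀' : Fin (n - 1) → ZMod 2 := ψ.symm ⟨x₀, hx₀K⟩ with hx₀'
    have hφx₀ : φ x₀' = x₀ := by simp [hφ, hx₀']
    have hmemH' : ∀ u, u ∈ H' ↔ φ u ∈ H := fun u => by
      rw [hH', Submodule.mem_comap, Submodule.mem_inf]
      exact ⟨fun h => h.1, fun h => ⟨h, hφK u⟩⟩
    have hmemW' : ∀ u, u ∈ W' ↔ φ u ∈ W := fun u => by
      rw [hW', Submodule.mem_comap, Submodule.mem_inf]
      exact ⟨fun h => h.1, fun h => ⟨h, hφK u⟩⟩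
    have hcomap : ∀ P : Submodule (ZMod 2) (Fin n → ZMod 2), P ≤ K →
        finrank (ZMod 2) (Submodule.comap φ P) = finrank (ZMod 2) P := by
      intro P hPK
      have hmap : Submodule.map φ (Submodule.comap φ P) = P := by
        rw [Submodule.map_comap_eq, hrangeφ]
        exact inf_eq_right.2 hPK
      conv_rhs => rw [← hmap]
      exact (Submodule.equivMapOfInjective φ hφinj _).finrank_eq
    have hH'rank : finrank (ZMod 2) H' + 1 = n - 1 := by
      rw [hH', hcomap _ inf_le_right, hHK]; omega
    have hW'rank : finrank (ZMod 2) W' = t := by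
      rw [hW', hcomap _ inf_le_right, hWK]
    have hW'H' : W' ≤ H' := Submodule.comap_mono (inf_le_inf_right K hWH)
    have hx₀'H : x₀' ∈ H' := (hmemH' _).2 (by rw [hφx₀]; exact hx₀H)
    have hx₀'W : x₀' ∉ W' := fun h => hx₀W (by rw [← hφx₀]; exact (hmemW' _).1 h)
    have hx₀'0 : x₀' ≠ 0 := fun h => hx₀0 (by rw [← hφx₀, h, map_zero])
    obtain ⟨M₀, hM₀dim, hM₀2, hM₀AGo, hchain⟩ :=
      ih (n - 1) H' W' x₀' hW'H' hH'rank hW'rank hx₀'H hx₀'W hx₀'0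
    refine ⟨M₀, by rw [hM₀dim]; omega, hM₀2, hM₀AGo, hchain.tail ?_⟩
    -- the doubling step
    have hwE : w ∉ ESet n H W x₀ := by
      rintro ⟨-, h | h⟩
      · exact h hwH
      · exact hx₀W (by have h2 := W.add_mem h hwW; rwa [add_assoc, vadd_self, add_zero] at h2)
    have himg : φ '' ESet (n - 1) H' W' x₀' = ESet n H W x₀ ∩ (K : Set (Fin n → ZMod 2)) := by
      ext u
      constructor
      · rintro ⟨v, ⟨hv0, hvor⟩, rfl⟩
        refine ⟨⟨fun h => hv0 (hφinj (by rw [h, map_zero])), ?_⟩, hφK v⟩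
        rcases hvor with h | h
        · exact Or.inl (fun hmem => h ((hmemH' v).2 hmem))
        · refine Or.inr ?_
          have h2 : φ (x₀' + v) ∈ W := (hmemW' _).1 h
          rwa [map_add, hφx₀] at h2
      · rintro ⟨⟨hu0, hor⟩, huK⟩
        obtain ⟨v, rfl⟩ := hφsurj u huK
        refine ⟨v, ⟨fun h => hu0 (by rw [h, map_zero]), ?_⟩, rfl⟩
        rcases hor with h | h
        · exact Or.inl (fun hmem => h ((hmemH' v).1 hmem))
        · exact Or.inr ((hmemW' _).2 (by rw [map_add, hφx₀]; exact h))
    refine ⟨show n = (n - 1) + 1 by omega, φ, hφinj, w, hw0,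
      fun ⟨u, hu⟩ => hwK (hu ▸ hφK u), hwE, ?_⟩
    show ESet n H W x₀ = φ '' ESet (n - 1) H' W' x₀' ∪
      (fun x => w + x) '' (φ '' ESet (n - 1) H' W' x₀')
    rw [himg]
    ext u
    constructor
    · intro hu
      by_cases huK : u ∈ K
      · exact Or.inl ⟨hu, huK⟩
      · right
        have hfu : f u = 1 := by
          rcases zmod2_cases (f u) with h | h
          · exact absurd ((hmemK u).2 h) huK
          · exact h
        have hwuK : w + u ∈ K := by
          rw [hmemK, map_add, hfw, hfu]
          decide
        have hune : u ≠ w := fun h => hwE (h ▸ hu)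
        have hwuE : w + u ∈ ESet n H W x₀ := by
          obtain ⟨hu0, hor⟩ := hu
          refine ⟨fun h => hune (eq_of_vadd_eq_zero h).symm, ?_⟩
          rcases hor with h | h
          · exact Or.inl (fun hmem => h (vadd_cancel w u ▸ H.add_mem hwH hmem))
          · refine Or.inr ?_
            have h2 := W.add_mem h hwW
            have heq : x₀ + (w + u) = x₀ + u + w := by abel
            rw [heq]; exact h2
        exact ⟨w + u, ⟨hwuE, hwuK⟩, vadd_cancel w u⟩
    · rintro (h | ⟨v, ⟨hvE, hvK⟩, rfl⟩)
      · exact h.1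
      · show w + v ∈ ESet n H W x₀
        obtain ⟨hv0, hor⟩ := hvE
        refine ⟨fun h => hwK ((eq_of_vadd_eq_zero h) ▸ hvK), ?_⟩
        rcases hor with h | h
        · exact Or.inl (fun hmem => h (vadd_cancel w v ▸ H.add_mem hwH hmem))
        · refine Or.inr ?_
          have h2 := W.add_mem h hwW
          have heq : x₀ + (w + v) = x₀ + v + w := by abel
          rw [heq]; exact h2

/-- Let `M = (E, G)` be an `n`-dimensional matroid with an
`AG(n−1, 2)`-restriction, i.e. `G − H ⊆ E` for some hyperplane `H` of `G`. If `M`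
contains neither `F₇` nor `I₃` as an induced restriction, then either `M ≅ AG(n−1, 2)`,
or there is `s ≥ 2` such that `M` arises from `AG°(s−1, 2)` by a sequence of
doublings. -/
theorem stmt17 (M : BinMatroid)
    (H : Submodule (ZMod 2) (Fin M.dim → ZMod 2))
    (hH : Module.finrank (ZMod 2) H + 1 = M.dim)
    (hAG : {v : Fin M.dim → ZMod 2 | v ≠ 0} \ (H : Set (Fin M.dim → ZMod 2)) ⊆ M.E)
    (hF7 : ¬ M.HasIR F7) (hI3 : ¬ M.HasIR I3) :
    (∃ H' : Submodule (ZMod 2) (Fin M.dim → ZMod 2),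
        Module.finrank (ZMod 2) H' + 1 = M.dim ∧
        M.E = {v | v ≠ 0} \ (H' : Set (Fin M.dim → ZMod 2))) ∨
      ∃ s : ℕ, 2 ≤ s ∧ ∃ M₀ : BinMatroid, M₀.dim = s ∧
        M₀.IsAGo ∧ M.ArisesByDoublings M₀ := by
  by_cases hE₀ : ∃ x₀, x₀ ∈ M.E ∧ x₀ ∈ H
  · obtain ⟨x₀, hx₀E, hx₀H⟩ := hE₀
    have hx₀0 : x₀ ≠ 0 := fun h => M.zero_not_mem (h ▸ hx₀E)
    let S : Submodule (ZMod 2) (Fin M.dim → ZMod 2) :=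
      { carrier := {v | v = 0 ∨ (x₀ + v ∈ M.E ∧ v ∈ H)}
        zero_mem' := Or.inl rfl
        add_mem' := by
          rintro u v hu hv
          simp only [Set.mem_setOf_eq] at hu hv ⊢
          by_cases hu0 : u = 0
          · subst hu0; simpa using hv
          by_cases hv0 : v = 0
          · subst hv0; simpa using hu
          rcases hu with rfl | ⟨huE, huH⟩
          · exact absurd rfl hu0
          rcases hv with rfl | ⟨hvE, hvH⟩
          · exact absurd rfl hv0
          by_cases huv : u = v
          · exact Or.inl (by rw [huv, vadd_self])
          right
          have heH : x₀ + u ∈ H := H.add_mem hx₀H huH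
          have hfH : x₀ + v ∈ H := H.add_mem hx₀H hvH
          have hef : x₀ + u ≠ x₀ + v := fun h => huv (add_left_cancel h)
          have hex : x₀ + u ≠ x₀ := fun h => hu0 (by
            have h2 : x₀ + u = x₀ + 0 := by rw [h, add_zero]
            exact add_left_cancel h2)
          have hfx : x₀ + v ≠ x₀ := fun h => hv0 (by
            have h2 : x₀ + v = x₀ + 0 := by rw [h, add_zero]
            exact add_left_cancel h2)
          have hs0 : (x₀ + u) + (x₀ + v) + x₀ ≠ 0 := by
            intro h
            have h2 : (x₀ + u) + (x₀ + v) = x₀ := eq_of_vadd_eq_zero h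
            exact (noTriangle M H hH hAG hF7 huE heH hvE hfH hef) (h2.symm ▸ hx₀E)
          have htriple := tripleSum M H hH hAG hF7 hI3 huE heH hvE hfH hx₀E hx₀H
            hef hex hfx hs0
          have heq : (x₀ + u) + (x₀ + v) + x₀ = x₀ + (u + v) := by
            have h3 : (x₀ + u) + (x₀ + v) + x₀ = x₀ + (u + v) + (x₀ + x₀) := by abel
            rw [h3, vadd_self, add_zero]
          exact ⟨heq ▸ htriple, H.add_mem huH hvH⟩
        smul_mem' := by
          intro c v hv
          simp only [Set.mem_setOf_eq] at hv ⊢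
          rcases zmod2_cases c with rfl | rfl
          · simp
          · simpa using hv }
    have hSmem : ∀ v, v ∈ S ↔ (v = 0 ∨ (x₀ + v ∈ M.E ∧ v ∈ H)) := fun v => Iff.rfl
    have hx₀S : x₀ ∉ S := by
      rw [hSmem]
      rintro (h | ⟨hE, -⟩)
      · exact hx₀0 h
      · rw [vadd_self] at hE; exact M.zero_not_mem hE
    have hSH : S ≤ H := by
      intro v hv
      rcases (hSmem v).1 hv with rfl | ⟨-, h⟩
      · exact H.zero_mem
      · exact h
    have hME : M.E = ESet M.dim H S x₀ := by
      ext v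
      simp only [ESet, Set.mem_setOf_eq, hSmem, SetLike.mem_coe]
      constructor
      · intro hv
        refine ⟨fun h => M.zero_not_mem (h ▸ hv), ?_⟩
        by_cases hvH : v ∈ H
        · by_cases h0 : x₀ + v = 0
          · exact Or.inr (Or.inl h0)
          · exact Or.inr (Or.inr ⟨by rw [vadd_cancel]; exact hv, H.add_mem hx₀H hvH⟩)
        · exact Or.inl hvH
      · rintro ⟨hv0, hvH | (h0 | ⟨hE, -⟩)⟩
        · exact hAG ⟨hv0, hvH⟩
        · exact (eq_of_vadd_eq_zero h0) ▸ hx₀E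
        · rwa [vadd_cancel] at hE
    obtain ⟨M₀, hdim, h2, hAGo, hchain⟩ :=
      key (finrank (ZMod 2) S) M.dim H S x₀ hSH hH rfl hx₀H hx₀S hx₀0
    right
    refine ⟨M₀.dim, h2, M₀, rfl, hAGo, EMat M.dim H S x₀, hchain, ?_⟩
    refine ⟨LinearMap.id, Function.bijective_id, ?_⟩
    show LinearMap.id '' ESet M.dim H S x₀ = M.E ∩ (Set.range ⇑(LinearMap.id (R := ZMod 2)
      (M := Fin M.dim → ZMod 2)) \ {0})
    change (id : (Fin M.dim → ZMod 2) → _) '' ESet M.dim H S x₀ =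
      M.E ∩ (Set.range (id : (Fin M.dim → ZMod 2) → _) \ {0})
    rw [Set.image_id, Set.range_id, ← hME]
    ext v
    simp only [Set.mem_inter_iff, Set.mem_diff, Set.mem_univ, Set.mem_singleton_iff, true_and]
    exact ⟨fun hv => ⟨hv, fun h => M.zero_not_mem (h ▸ hv)⟩, fun h => h.1⟩
  · push_neg at hE₀
    left
    refine ⟨H, hH, ?_⟩
    ext v
    simp only [Set.mem_diff, Set.mem_setOf_eq, SetLike.mem_coe]
    exact ⟨fun hv => ⟨fun h => M.zero_not_mem (h ▸ hv), fun h => hE₀ v hv h⟩,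
      fun hv => hAG hv⟩
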